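/- Let Y be a set and consider the dissipative multiplicative flow ψ_c(y,u) = (y, u + ln c) on Y × ℝ. Let κ ∈ ℝ, let b : Y × ℝ → {−1,1} be a function and define the cocycle b_c(y,u) = b(y, u + ln c)/b(y,u). Suppose j : (0,∞) × (Y × ℝ) → ℝ, written j_c(y,u), satisfies j_{c1c2}(y,u) = c2^{-κ} j_{c1}(y,u) + b_{c1}(y,u) j_{c2}(y, u + ln c1) for all c1, c2 > 0 and all (y,u) ∈ Y × ℝ. Then there exists a function j* : Y × ℝ → ℝ such that j_c(y,u) = b_c(y,u) j*(y, u + ln c) − c^{-κ} j*(y,u) for all c > 0 and all (y,u) ∈ Y × ℝ. -/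
import Mathlib

lemma sq_one_of_pm {x : ℝ} (h : x = 1 ∨ x = -1) : x * x = 1 := by
  rcases h with h | h <;> simp [h]

/-- for the dissipative flow `ψ_c(y,u) = (y, u + ln c)` on `Y × ℝ` and
the cocycle `b_c(y,u) = b(y, u + ln c)/b(y,u)` (with `b` taking values in `{−1,1}`),
every solution of the 2-semi-additive functional equation
`j_{c1c2}(y,u) = c2^{-κ} j_{c1}(y,u) + b_{c1}(y,u) j_{c2}(y, u + ln c1)` is of the form
`j_c(y,u) = b_c(y,u) j*(y, u + ln c) − c^{-κ} j*(y,u)`. -/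
theorem stmt14 {Y : Type*} (κ : ℝ)
    (b : Y × ℝ → ℝ) (hb_val : ∀ p : Y × ℝ, b p = 1 ∨ b p = -1)
    (j : ℝ → Y × ℝ → ℝ)
    (hj : ∀ c1 c2 : ℝ, 0 < c1 → 0 < c2 → ∀ (y : Y) (u : ℝ),
      j (c1 * c2) (y, u) = c2 ^ (-κ) * j c1 (y, u) +
        (b (y, u + Real.log c1) / b (y, u)) * j c2 (y, u + Real.log c1)) :
    ∃ jstar : Y × ℝ → ℝ, ∀ c : ℝ, 0 < c → ∀ (y : Y) (u : ℝ),
      j c (y, u) = (b (y, u + Real.log c) / b (y, u)) * jstar (y, u + Real.log c) -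
        c ^ (-κ) * jstar (y, u) := by
  refine ⟨fun p => b p * b (p.1, 0) * j (Real.exp p.2) (p.1, 0), fun c hc y u => ?_⟩
  have key := hj (Real.exp u) c (Real.exp_pos u) hc y 0
  rw [Real.log_exp, zero_add] at key
  have hsq : ∀ p : Y × ℝ, b p * b p = 1 := fun p => sq_one_of_pm (hb_val p)
  have hne : ∀ p : Y × ℝ, b p ≠ 0 := by
    intro p; rcases hb_val p with h | h <;> simp [h]
  simp only []
  rw [show Real.exp (u + Real.log c) = Real.exp u * c by
    rw [Real.exp_add, Real.exp_log hc]]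
  rw [key]
  rcases hb_val (y, u + Real.log c) with h1 | h1 <;>
    rcases hb_val (y, u) with h2 | h2 <;>
      rcases hb_val (y, 0) with h0 | h0 <;>
        simp only [h1, h2, h0] <;> ring
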